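/- Let m ≥ 3 be odd and let d be an integer with gcd(d, 2^m - 1) = 1 such that the power function x ↦ x^d on F = GF(2^m) is maximum nonlinear. Then for every α ∈ F \ {0}, the cardinality |D_d ∩ H^0(α)| belongs to the set {2^(m-2), 2^(m-2) - 2^((m-3)/2), 2^(m-2) + 2^((m-3)/2)}. -/

import Mathlib

attribute [local instance] Classical.propDecidable

noncomputable instance (m : ℕ) : Fintype (GaloisField 2 m) := Fintype.ofFinite _

/-- The absolute trace map from `GF(2^m)` to `GF(2)`. -/
noncomputable def tr (m : ℕ) (x : GaloisField 2 m) : ZMod 2 :=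
  Algebra.trace (ZMod 2) (GaloisField 2 m) x

/-- `(-1)^t` as an integer, for `t ∈ GF(2)`. -/
def chi (t : ZMod 2) : ℤ := (-1) ^ t.val

/-- The Walsh coefficient `∑_{x ∈ F} (-1)^(tr(γx + βx^d))` of the power map `x ↦ x^d`. -/
noncomputable def walsh (m d : ℕ) (β γ : GaloisField 2 m) : ℤ :=
  ∑ x : GaloisField 2 m, chi (tr m (γ * x + β * x ^ d))

/-- The power function `x ↦ x^d` on `GF(2^m)` is maximum nonlinear (almost bent). -/
def MaxNonlinear (m d : ℕ) : Prop :=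
  ∀ β : GaloisField 2 m, β ≠ 0 → ∀ γ : GaloisField 2 m,
    walsh m d β γ ∈ ({0, 2 ^ ((m + 1) / 2), -(2 ^ ((m + 1) / 2))} : Set ℤ)

/-- `D_d = {x ∈ F : tr(x^d) = 1}`. -/
noncomputable def Dd (m d : ℕ) : Finset (GaloisField 2 m) :=
  Finset.univ.filter (fun x => tr m (x ^ d) = 1)

/-- `H^i(α) = {x ∈ F : tr(αx) = i}`. -/
noncomputable def Hi (m : ℕ) (α : GaloisField 2 m) (i : ZMod 2) :
    Finset (GaloisField 2 m) :=
  Finset.univ.filter (fun x => tr m (α * x) = i)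

/-- `H^{i,j}(α,β) = {x ∈ F : tr(αx) = i and tr(βx) = j}`. -/
noncomputable def Hij (m : ℕ) (α β : GaloisField 2 m) (i j : ZMod 2) :
    Finset (GaloisField 2 m) :=
  Finset.univ.filter (fun x => tr m (α * x) = i ∧ tr m (β * x) = j)

lemma zmod2_cases (t : ZMod 2) : t = 0 ∨ t = 1 := by revert t; decide

lemma chi_add (a b : ZMod 2) : chi (a + b) = chi a * chi b := by revert a b; decide

lemma chi_succ (a : ZMod 2) : chi a + chi (a + 1) = 0 := by revert a; decide

lemma tr_add (m : ℕ) (x y : GaloisField 2 m) : tr m (x + y) = tr m x + tr m y := by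
  simp [tr, map_add]

lemma tr_exists_one (m : ℕ) (α : GaloisField 2 m) (hα : α ≠ 0) :
    ∃ y, tr m (α * y) = 1 := by
  have h := (traceForm_nondegenerate (ZMod 2) (GaloisField 2 m)).1 α
  simp_rw [Algebra.traceForm_apply] at h
  by_contra! hf
  refine hα (h fun y => ?_)
  rcases zmod2_cases (Algebra.trace (ZMod 2) (GaloisField 2 m) (α * y)) with h0 | h1
  · exact h0
  · exact absurd h1 (hf y)

lemma sum_chi_eq_zero (m : ℕ) (α : GaloisField 2 m) (hα : α ≠ 0) :
    ∑ x : GaloisField 2 m, chi (tr m (α * x)) = 0 := by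
  obtain ⟨y, hy⟩ := tr_exists_one m α hα
  have hy0 : y ≠ 0 := by
    rintro rfl
    rw [mul_zero] at hy
    simp [tr] at hy
  refine Finset.sum_ninvolution (fun x => x + y) (fun x => ?_) (fun x _ => ?_)
    (fun x => Finset.mem_univ _) (fun x => ?_)
  · have : tr m (α * (x + y)) = tr m (α * x) + 1 := by
      rw [mul_add, tr_add, hy]
    rw [this]
    exact chi_succ _
  · intro h
    apply hy0
    have := congrArg (fun z => z - x) h
    simpa using this
  · show x + y + y = x
    rw [add_assoc, CharTwo.add_self_eq_zero, add_zero]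

lemma pow_d_bijective (m d : ℕ) (hm : 2 ≤ m) (hgcd : Nat.gcd d (2 ^ m - 1) = 1) :
    Function.Bijective (fun x : GaloisField 2 m => x ^ d) := by
  have hcard : Fintype.card (GaloisField 2 m) = 2 ^ m := by
    rw [← Nat.card_eq_fintype_card, GaloisField.card 2 m (by omega)]
  have h2m : 4 ≤ 2 ^ m := by
    calc 4 = 2 ^ 2 := by norm_num
    _ ≤ 2 ^ m := Nat.pow_le_pow_right (by norm_num) hm
  have hd0 : d ≠ 0 := by
    rintro rfl
    rw [Nat.gcd_zero_left] at hgcd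
    omega
  have hc : (Nat.card (GaloisField 2 m)ˣ).Coprime d := by
    have : Nat.card (GaloisField 2 m)ˣ = 2 ^ m - 1 := by
      rw [Nat.card_eq_fintype_card, Fintype.card_units, hcard]
    rw [this]
    exact Nat.Coprime.symm hgcd
  rw [← Finite.injective_iff_bijective]
  intro x z hxz
  simp only at hxz
  by_cases hx : x = 0
  · subst hx
    rw [zero_pow hd0] at hxz
    exact (pow_eq_zero_iff hd0).mp hxz.symm |>.symm
  by_cases hz : z = 0
  · subst hz
    rw [zero_pow hd0] at hxz
    exact (pow_eq_zero_iff hd0).mp hxz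
  · have := (powCoprime hc).injective (a₁ := Units.mk0 x hx) (a₂ := Units.mk0 z hz) ?_
    · have := congrArg Units.val this
      simpa using this
    · apply Units.ext
      simpa [powCoprime_apply] using hxz

lemma key_pointwise (a b : ZMod 2) :
    (1 - chi a) * (1 + chi b) = if a = 1 ∧ b = 0 then 4 else 0 := by
  rcases zmod2_cases a with rfl | rfl <;> rcases zmod2_cases b with rfl | rfl  <;>
    simp [chi, ZMod.val_one]

/-- For a maximum nonlinear power map `x ↦ x^d` on `GF(2^m)` (`m ≥ 3` odd,
`gcd(d, 2^m - 1) = 1`), every intersection of `D_d` with a hyperplane `H^0(α)`, `α ≠ 0`,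
has size `2^(m-2)` or `2^(m-2) ± 2^((m-3)/2)`. -/
theorem stmt14 (m : ℕ) (hm3 : 3 ≤ m) (hmodd : Odd m) (d : ℕ)
    (hgcd : Nat.gcd d (2 ^ m - 1) = 1) (hmax : MaxNonlinear m d) :
    ∀ α : GaloisField 2 m, α ≠ 0 →
      ((Dd m d ∩ Hi m α 0).card : ℤ) ∈
        ({2 ^ (m - 2), 2 ^ (m - 2) - 2 ^ ((m - 3) / 2),
          2 ^ (m - 2) + 2 ^ ((m - 3) / 2)} : Set ℤ) := by
  intro α hα
  have hm0 : m ≠ 0 := by omega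
  have hcard : Fintype.card (GaloisField 2 m) = 2 ^ m := by
    rw [← Nat.card_eq_fintype_card, GaloisField.card 2 m hm0]
  set N : ℤ := ((Dd m d ∩ Hi m α 0).card : ℤ) with hN
  -- the intersection as a filter
  have hset : Dd m d ∩ Hi m α 0 =
      Finset.univ.filter (fun x => tr m (x ^ d) = 1 ∧ tr m (α * x) = 0) := by
    ext x
    simp [Dd, Hi, Finset.mem_filter, Finset.mem_inter, and_assoc]
  -- main sum identity
  have hsum : ∑ x : GaloisField 2 m,
      (1 - chi (tr m (x ^ d))) * (1 + chi (tr m (α * x))) = 4 * N := by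
    have : ∀ x : GaloisField 2 m,
        (1 - chi (tr m (x ^ d))) * (1 + chi (tr m (α * x))) =
        if tr m (x ^ d) = 1 ∧ tr m (α * x) = 0 then (4 : ℤ) else 0 := fun x => by
      rw [key_pointwise]
    rw [Finset.sum_congr rfl (fun x _ => this x), ← Finset.sum_filter, Finset.sum_const,
      ← hset, hN]
    push_cast
    ring
  -- expand the product
  have hexpand : ∀ x : GaloisField 2 m,
      (1 - chi (tr m (x ^ d))) * (1 + chi (tr m (α * x))) =
      1 + chi (tr m (α * x)) - chi (tr m (x ^ d)) - chi (tr m (α * x + x ^ d)) := by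
    intro x
    rw [tr_add, chi_add]
    ring
  have hS0 : ∑ x : GaloisField 2 m, chi (tr m (α * x)) = 0 := sum_chi_eq_zero m α hα
  have hSd : ∑ x : GaloisField 2 m, chi (tr m (x ^ d)) = 0 := by
    have hb := pow_d_bijective m d (by omega) hgcd
    have heq := Fintype.sum_bijective _ hb (fun x => chi (tr m (x ^ d)))
      (fun y => chi (tr m y)) (fun x => rfl)
    have h1 : ∑ y : GaloisField 2 m, chi (tr m y) = 0 := by
      have := sum_chi_eq_zero m 1 one_ne_zero
      simpa [one_mul] using this
    rw [heq, h1]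
  have hW : walsh m d 1 α = ∑ x : GaloisField 2 m, chi (tr m (α * x + x ^ d)) := by
    unfold walsh
    simp_rw [one_mul]
  have hmain : 4 * N = 2 ^ m - walsh m d 1 α := by
    rw [← hsum, Finset.sum_congr rfl (fun x _ => hexpand x)]
    rw [Finset.sum_sub_distrib, Finset.sum_sub_distrib, Finset.sum_add_distrib,
      hS0, hSd, ← hW, Finset.sum_const, Finset.card_univ, hcard, nsmul_eq_mul]
    push_cast
    ring
  -- use maximum nonlinearity
  have hw := hmax 1 one_ne_zero α
  have h2m : (2 : ℤ) ^ m = 4 * 2 ^ (m - 2) := by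
    have h : m - 2 + 2 = m := by omega
    calc (2 : ℤ) ^ m = 2 ^ (m - 2 + 2) := by rw [h]
    _ = 4 * 2 ^ (m - 2) := by rw [pow_add]; ring
  have h2h : (2 : ℤ) ^ ((m + 1) / 2) = 4 * 2 ^ ((m - 3) / 2) := by
    have h : (m - 3) / 2 + 2 = (m + 1) / 2 := by omega
    calc (2 : ℤ) ^ ((m + 1) / 2) = 2 ^ ((m - 3) / 2 + 2) := by rw [h]
    _ = 4 * 2 ^ ((m - 3) / 2) := by rw [pow_add]; ring
  have h4 : (4 : ℤ) ≠ 0 := by norm_num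
  simp only [Set.mem_insert_iff, Set.mem_singleton_iff] at hw ⊢
  rcases hw with h | h | h
  · left
    apply mul_left_cancel₀ h4
    rw [hmain, h, h2m]; ring
  · right; left
    apply mul_left_cancel₀ h4
    rw [hmain, h, h2m, h2h]; ring
  · right; right
    apply mul_left_cancel₀ h4
    rw [hmain, h, h2m, h2h]; ring
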